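/- Let K = ℚ(s,t) and let v₀ be a valuation dominating A = ℚ[s,t]_{(s,t)} with value group contained in ℚ, satisfying v₀(s) = 1, v₀(t) = 3/2, residue field Kv₀ = ℚ, and such that the residue class of t²/s³ equals 1. Then there is no element φ in the valuation ring O_{v₀} with v₀(φ) = 1/2 and φ² ∼_{v₀} −s; equivalently, the polynomial f(x) = x² + s does not factor modulo v₀-equivalence as a product (x + φ₁)(x + φ₂) with φ₁, φ₂ ∈ O_{v₀}. -/

import Mathlib

/-- `K = ℚ(s,t)`, the rational function field in two variables over `ℚ`. -/
abbrev ExampleField : Type := FractionRing (MvPolynomial (Fin 2) ℚ)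

/-- The variable `s` of `ℚ(s,t)`. -/
noncomputable def sElt : ExampleField :=
  algebraMap (MvPolynomial (Fin 2) ℚ) ExampleField (MvPolynomial.X 0)

/-- The variable `t` of `ℚ(s,t)`. -/
noncomputable def tElt : ExampleField :=
  algebraMap (MvPolynomial (Fin 2) ℚ) ExampleField (MvPolynomial.X 1)

/-- Let `K = ℚ(s,t)` and let `v₀` be a valuation (dominating
`ℚ[s,t]_(s,t)`, in particular trivial on `ℚ`) with value group contained in `ℚ`,
`v₀ s = 1`, `v₀ t = 3/2`, residue field `Kv₀ = ℚ` (every unit is congruent to a rational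
constant modulo the maximal ideal) and residue class `[t²/s³] = 1`.  Then there is no `φ` in
the valuation ring of `v₀` with `v₀ φ = 1/2` and `φ² ∼_{v₀} (−s)`; i.e. `x² + s` does not
factor modulo `v₀`-equivalence as `(x + φ₁)(x + φ₂)` with `φᵢ ∈ O_{v₀}`.  Here
`φ² ∼_{v₀} (−s)` means `v₀(φ² + s) > min(v₀ φ², v₀ s) = 1`. -/
theorem stmt_4 (v : AddValuation ExampleField (WithTop ℚ))
    (hs : v sElt = ((1 : ℚ) : WithTop ℚ))
    (ht : v tElt = ((3/2 : ℚ) : WithTop ℚ))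
    (hrat : ∀ c : ℚ, c ≠ 0 → v (c : ExampleField) = 0)
    (hres : ∀ u : ExampleField, v u = 0 → ∃ c : ℚ, 0 < v (u - (c : ExampleField)))
    (hresval : 0 < v (tElt ^ 2 / sElt ^ 3 - 1)) :
    ¬ ∃ φ : ExampleField, v φ = ((1/2 : ℚ) : WithTop ℚ) ∧
      ((1 : ℚ) : WithTop ℚ) < v (φ ^ 2 + sElt) := by
  rintro ⟨φ, hφ, hfac⟩
  have hs0 : sElt ≠ 0 := by
    intro h
    rw [h, AddValuation.map_zero] at hs
    exact (WithTop.coe_ne_top (a := (1:ℚ))) hs.symm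
  have ht0 : tElt ≠ 0 := by
    intro h
    rw [h, AddValuation.map_zero] at ht
    exact (WithTop.coe_ne_top (a := (3/2:ℚ))) ht.symm
  -- the "unit" u = φ s / t
  set u : ExampleField := φ * sElt / tElt with hu_def
  have hut : u * tElt = φ * sElt := by
    rw [hu_def]; exact div_mul_cancel₀ _ ht0
  have hu0 : v u = 0 := by
    have h1 : v u + v tElt = v φ + v sElt := by
      rw [← AddValuation.map_mul, ← AddValuation.map_mul, hut]
    rw [ht, hφ, hs] at h1
    have h2 : v u + ((3/2 : ℚ) : WithTop ℚ) = (0 : WithTop ℚ) + ((3/2 : ℚ) : WithTop ℚ) := by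
      rw [h1, zero_add, ← WithTop.coe_add]
      norm_num
    exact WithTop.add_right_cancel (WithTop.coe_ne_top) h2
  obtain ⟨c, hc⟩ := hres u hu0
  have hc0 : c ≠ 0 := by
    intro h
    rw [h] at hc
    simp only [Rat.cast_zero, sub_zero, hu0] at hc
    exact lt_irrefl _ hc
  have hvc : v ((c : ExampleField)) = 0 := hrat c hc0
  -- v(u + c) ≥ 0
  have huc : (0 : WithTop ℚ) ≤ v (u + (c : ExampleField)) := by
    have : u + (c : ExampleField) = (u - (c : ExampleField)) + (2 * c : ℚ) := by
      push_cast; ring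
    rw [this]
    refine AddValuation.map_le_add v (le_of_lt hc) ?_
    rw [hrat (2 * c) (by simpa using hc0)]
  -- v(u² - c²) > 0
  have hsq : (0 : WithTop ℚ) < v (u ^ 2 - (c : ExampleField) ^ 2) := by
    have heq : u ^ 2 - (c : ExampleField) ^ 2
        = (u - (c : ExampleField)) * (u + (c : ExampleField)) := by ring
    rw [heq, AddValuation.map_mul]
    calc (0 : WithTop ℚ) = 0 + 0 := by simp
    _ < v (u - (c : ExampleField)) + v (u + (c : ExampleField)) :=
        WithTop.add_lt_add_of_lt_of_le (by simp [hc.ne']) hc huc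
  -- v(s³) = 3 and v(t² - s³) > 3
  have hvs3 : v (sElt ^ 3) = ((3 : ℚ) : WithTop ℚ) := by
    rw [AddValuation.map_pow, hs]
    rw [show ((3:ℕ) • ((1:ℚ) : WithTop ℚ)) = (((3:ℕ) • (1:ℚ) : ℚ) : WithTop ℚ) from by
      push_cast; ring]
    norm_num
  have hvt2 : v (tElt ^ 2) = ((3 : ℚ) : WithTop ℚ) := by
    rw [AddValuation.map_pow, ht]
    rw [show ((2:ℕ) • ((3/2:ℚ) : WithTop ℚ)) = (((2:ℕ) • (3/2:ℚ) : ℚ) : WithTop ℚ) from by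
      push_cast; ring]
    norm_num
  have hts : ((3 : ℚ) : WithTop ℚ) < v (tElt ^ 2 - sElt ^ 3) := by
    have heq : tElt ^ 2 - sElt ^ 3 = sElt ^ 3 * (tElt ^ 2 / sElt ^ 3 - 1) := by
      field_simp
    rw [heq, AddValuation.map_mul, hvs3]
    calc ((3 : ℚ) : WithTop ℚ) = ((3 : ℚ) : WithTop ℚ) + 0 := by simp
    _ < ((3 : ℚ) : WithTop ℚ) + v (tElt ^ 2 / sElt ^ 3 - 1) :=
        WithTop.add_lt_add_of_le_of_lt (WithTop.coe_ne_top) le_rfl hresval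
  -- v(t² (u² - c²)) > 3
  have hA : ((3 : ℚ) : WithTop ℚ) < v (tElt ^ 2 * (u ^ 2 - (c : ExampleField) ^ 2)) := by
    rw [AddValuation.map_mul, hvt2]
    calc ((3 : ℚ) : WithTop ℚ) = ((3 : ℚ) : WithTop ℚ) + 0 := by simp
    _ < _ := WithTop.add_lt_add_of_le_of_lt (WithTop.coe_ne_top) le_rfl hsq
  -- v(c² (t² - s³)) > 3
  have hC : ((3 : ℚ) : WithTop ℚ) < v ((c : ExampleField) ^ 2 * (tElt ^ 2 - sElt ^ 3)) := by
    rw [AddValuation.map_mul]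
    have : v ((c : ExampleField) ^ 2) = 0 := by
      rw [AddValuation.map_pow, hvc]; simp
    rw [this, zero_add]
    exact hts
  -- v(s² (φ² + s)) > 3
  have hX : ((3 : ℚ) : WithTop ℚ) < v (sElt ^ 2 * (φ ^ 2 + sElt)) := by
    rw [AddValuation.map_mul, AddValuation.map_pow, hs]
    have h2 : ((2:ℕ) • ((1:ℚ) : WithTop ℚ)) = ((2 : ℚ) : WithTop ℚ) := by
      rw [show ((2:ℕ) • ((1:ℚ) : WithTop ℚ)) = (((2:ℕ) • (1:ℚ) : ℚ) : WithTop ℚ) from by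
        push_cast; ring]
      norm_num
    rw [h2]
    have h3 : ((3 : ℚ) : WithTop ℚ) = ((2 : ℚ) : WithTop ℚ) + ((1 : ℚ) : WithTop ℚ) := by
      rw [← WithTop.coe_add]; norm_num
    rw [h3]
    exact WithTop.add_lt_add_of_le_of_lt (WithTop.coe_ne_top) le_rfl hfac
  -- the key algebraic identity
  have hkey : ((c ^ 2 + 1 : ℚ) : ExampleField) * sElt ^ 3
      = sElt ^ 2 * (φ ^ 2 + sElt)
        - tElt ^ 2 * (u ^ 2 - (c : ExampleField) ^ 2)
        - (c : ExampleField) ^ 2 * (tElt ^ 2 - sElt ^ 3) := by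
    rw [hu_def]
    push_cast
    field_simp
    ring
  -- v of the left side is exactly 3
  have hB : v (((c ^ 2 + 1 : ℚ) : ExampleField) * sElt ^ 3) = ((3 : ℚ) : WithTop ℚ) := by
    rw [AddValuation.map_mul, hrat (c ^ 2 + 1) (by positivity), hvs3, zero_add]
  -- but from the identity it is > 3: contradiction
  have hB' : ((3 : ℚ) : WithTop ℚ) < v (((c ^ 2 + 1 : ℚ) : ExampleField) * sElt ^ 3) := by
    rw [hkey]
    exact lt_of_lt_of_le (by exact lt_min (lt_min hX hA) hC) (by
      refine le_trans ?_ (AddValuation.map_sub v _ _)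
      refine min_le_min ?_ le_rfl
      exact le_trans (min_le_min le_rfl le_rfl) (AddValuation.map_sub v _ _))
  rw [hB] at hB'
  exact lt_irrefl _ hB'
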